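/- Let A be a nonnegative n×n real matrix with support, let Ã = [[0, A],[A^T, 0]] be its symmetric (2n)×(2n) embedding, and let C = diag(Ã 1_{2n}). Then C + Ã is symmetric positive semidefinite, and the linear system (C + Ã) y = (Ã − I_{2n}) 1_{2n} has a solution y ∈ ℝ^{2n}. -/

import Mathlib

open Finset Matrix

/-- for a nonnegative matrix `A` with support, with symmetric
embedding `Ã = [[0,A],[Aᵀ,0]]` and `C = diag(Ã 1)`, the matrix `C + Ã` is
symmetric positive semidefinite and the system `(C + Ã) y = (Ã − I) 1` is
consistent. -/
theorem stmt8 (n : ℕ) (A : Matrix (Fin n) (Fin n) ℝ) (hA : ∀ i j, 0 ≤ A i j)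
    (hsupp : ∃ σ : Equiv.Perm (Fin n), ∀ i, 0 < A i (σ i))
    (Atil : Matrix (Fin n ⊕ Fin n) (Fin n ⊕ Fin n) ℝ)
    (hAtil : Atil = Matrix.fromBlocks 0 A Aᵀ 0)
    (Cm : Matrix (Fin n ⊕ Fin n) (Fin n ⊕ Fin n) ℝ)
    (hCm : Cm = Matrix.diagonal (Atil *ᵥ fun _ => (1 : ℝ))) :
    (Cm + Atil).PosSemidef ∧
      ∃ w : Fin n ⊕ Fin n → ℝ, (Cm + Atil) *ᵥ w = (Atil - 1) *ᵥ fun _ => (1 : ℝ) := by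
  obtain ⟨σ, hσ⟩ := hsupp
  -- basic facts about Atil
  have hsym : ∀ i j, Atil i j = Atil j i := by
    intro i j
    subst hAtil
    rcases i with i | i <;> rcases j with j | j <;>
      simp [Matrix.fromBlocks, Matrix.transpose_apply]
  have hpos : ∀ i j, 0 ≤ Atil i j := by
    intro i j
    subst hAtil
    rcases i with i | i <;> rcases j with j | j <;>
      simp [Matrix.fromBlocks, Matrix.transpose_apply, hA _ _]
  have hedge : ∀ i : Fin n, 0 < Atil (Sum.inl i) (Sum.inr (σ i)) := by
    intro i
    subst hAtil
    simpa [Matrix.fromBlocks] using hσ i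
  -- row sums
  set d : (Fin n ⊕ Fin n) → ℝ := fun i => ∑ j, Atil i j with hd
  have hCd : Cm = Matrix.diagonal d := by
    rw [hCm]
    have h1 : (Atil *ᵥ fun _ => (1 : ℝ)) = d := by
      funext i
      simp only [Matrix.mulVec, dotProduct, mul_one, hd]
    rw [h1]
  -- entries of (Cm + Atil) *ᵥ x
  have hM : ∀ (x : (Fin n ⊕ Fin n) → ℝ) (i), ((Cm + Atil) *ᵥ x) i
      = d i * x i + ∑ j, Atil i j * x j := by
    intro x i
    rw [Matrix.add_mulVec, hCd, Pi.add_apply, Matrix.mulVec_diagonal]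
    rfl
  -- quadratic form
  have hq : ∀ x : (Fin n ⊕ Fin n) → ℝ, x ⬝ᵥ ((Cm + Atil) *ᵥ x)
      = ∑ i, ∑ j, (Atil i j * (x i * x i) + Atil i j * (x i * x j)) := by
    intro x
    simp only [dotProduct, hM]
    refine Finset.sum_congr rfl fun i _ => ?_
    rw [Finset.sum_add_distrib, ← Finset.sum_mul, mul_add, Finset.mul_sum]
    congr 1
    · simp only [hd]
      ring
    · exact Finset.sum_congr rfl fun j _ => by ring
  have key : ∀ x : (Fin n ⊕ Fin n) → ℝ,
      ∑ i, ∑ j, Atil i j * (x i + x j) ^ 2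
        = 2 * ∑ i, ∑ j, (Atil i j * (x i * x i) + Atil i j * (x i * x j)) := by
    intro x
    have h1 : ∀ i j, Atil i j * (x i + x j) ^ 2
        = (Atil i j * (x i * x i) + Atil i j * (x i * x j))
          + (Atil j i * (x j * x j) + Atil j i * (x j * x i)) := by
      intro i j
      rw [hsym i j]
      ring
    calc ∑ i, ∑ j, Atil i j * (x i + x j) ^ 2
        = ∑ i, ∑ j, ((Atil i j * (x i * x i) + Atil i j * (x i * x j))
            + (Atil j i * (x j * x j) + Atil j i * (x j * x i))) :=
          Finset.sum_congr rfl fun i _ => Finset.sum_congr rfl fun j _ => h1 i j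
      _ = (∑ i, ∑ j, (Atil i j * (x i * x i) + Atil i j * (x i * x j)))
            + ∑ i, ∑ j, (Atil j i * (x j * x j) + Atil j i * (x j * x i)) := by
          rw [← Finset.sum_add_distrib]
          exact Finset.sum_congr rfl fun i _ => by rw [← Finset.sum_add_distrib]
      _ = (∑ i, ∑ j, (Atil i j * (x i * x i) + Atil i j * (x i * x j)))
            + ∑ i, ∑ j, (Atil i j * (x i * x i) + Atil i j * (x i * x j)) := by
          congr 1
          exact Finset.sum_comm
      _ = 2 * ∑ i, ∑ j, (Atil i j * (x i * x i) + Atil i j * (x i * x j)) := by ring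
  have hqnonneg : ∀ x : (Fin n ⊕ Fin n) → ℝ, 0 ≤ x ⬝ᵥ ((Cm + Atil) *ᵥ x) := by
    intro x
    have h2 : 0 ≤ ∑ i, ∑ j, Atil i j * (x i + x j) ^ 2 :=
      Finset.sum_nonneg fun i _ => Finset.sum_nonneg fun j _ =>
        mul_nonneg (hpos i j) (sq_nonneg _)
    have h3 := key x
    rw [hq x] at *
    linarith [h3 ▸ h2]
  -- symmetry of Cm + Atil
  have htr : (Cm + Atil)ᵀ = Cm + Atil := by
    rw [Matrix.transpose_add, hCd, Matrix.diagonal_transpose]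
    congr 1
    ext i j
    exact hsym j i
  have hswapdot : ∀ u v : (Fin n ⊕ Fin n) → ℝ,
      ((Cm + Atil) *ᵥ u) ⬝ᵥ v = u ⬝ᵥ ((Cm + Atil) *ᵥ v) := by
    intro u v
    rw [dotProduct_comm, dotProduct_mulVec, ← Matrix.mulVec_transpose, htr,
      dotProduct_comm]
  have hpsd : (Cm + Atil).PosSemidef := by
    constructor
    · show (Cm + Atil)ᴴ = Cm + Atil
      rw [Matrix.conjTranspose]
      exact (Matrix.conjTranspose_eq_transpose_of_trivial _).trans htr
    · intro x
      refine le_of_le_of_eq (hqnonneg x) ?_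
      rw [Finsupp.sum_fintype _ _ (by simp)]
      simp only [dotProduct, mulVec]
      refine Finset.sum_congr rfl fun i _ => ?_
      rw [Finsupp.sum_fintype _ _ (by simp), Finset.mul_sum]
      refine Finset.sum_congr rfl fun j _ => ?_
      simp only [star_trivial]
      ring
  refine ⟨hpsd, ?_⟩
  -- the right-hand side
  have hb : ((Atil - 1) *ᵥ fun _ => (1 : ℝ)) = fun i => d i - 1 := by
    funext i
    rw [Matrix.sub_mulVec, Matrix.one_mulVec]
    simp [Matrix.mulVec, dotProduct, hd]
  -- kernel elements are orthogonal to the rhs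
  have hkerprop : ∀ k : (Fin n ⊕ Fin n) → ℝ, (Cm + Atil) *ᵥ k = 0 →
      (fun i => d i - 1) ⬝ᵥ k = 0 := by
    intro k hk
    have hq0 : ∑ i, ∑ j, Atil i j * (k i + k j) ^ 2 = 0 := by
      rw [key k, ← hq k, hk, dotProduct_zero, mul_zero]
    have hz : ∀ i j, Atil i j * (k i + k j) ^ 2 = 0 := by
      have h1 : ∑ p ∈ Finset.univ ×ˢ Finset.univ,
          Atil p.1 p.2 * (k p.1 + k p.2) ^ 2 = 0 := by
        rw [Finset.sum_product]
        exact hq0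
      intro i j
      have := (Finset.sum_eq_zero_iff_of_nonneg
        (fun p _ => mul_nonneg (hpos p.1 p.2) (sq_nonneg (k p.1 + k p.2)))).mp h1
      exact this (i, j) (by simp)
    have hedgek : ∀ i : Fin n, k (Sum.inl i) + k (Sum.inr (σ i)) = 0 := by
      intro i
      have h := hz (Sum.inl i) (Sum.inr (σ i))
      rcases mul_eq_zero.mp h with h' | h'
      · exact absurd h' (hedge i).ne'
      · exact pow_eq_zero_iff (by norm_num) |>.mp h'
    have hsumk : ∑ u, k u = 0 := by
      rw [Fintype.sum_sum_type]
      have h2 : ∑ j, k (Sum.inr j) = ∑ i, k (Sum.inr (σ i)) :=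
        (Equiv.sum_comp σ fun j => k (Sum.inr j)).symm
      rw [h2, ← Finset.sum_add_distrib]
      exact Finset.sum_eq_zero fun i _ => hedgek i
    have hrow : ∀ i, d i * k i + ∑ j, Atil i j * k j = 0 := by
      intro i
      have := congrFun hk i
      rwa [hM k i] at this
    have hs : ∑ i, d i * k i = 0 := by
      have h1 : ∑ i, (d i * k i + ∑ j, Atil i j * k j) = 0 :=
        Finset.sum_eq_zero fun i _ => hrow i
      rw [Finset.sum_add_distrib] at h1
      have h2 : ∑ i, ∑ j, Atil i j * k j = ∑ i, d i * k i := by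
        rw [Finset.sum_comm]
        refine Finset.sum_congr rfl fun j _ => ?_
        rw [← Finset.sum_mul]
        congr 1
        simp only [hd]
        exact Finset.sum_congr rfl fun i _ => hsym i j
      rw [h2] at h1
      linarith
    simp only [dotProduct, sub_mul, one_mul, Finset.sum_sub_distrib, hs, hsumk, sub_zero]
  -- decomposition of the space
  set f := Matrix.mulVecLin (Cm + Atil) with hf
  have hdisj : Disjoint (LinearMap.ker f) (LinearMap.range f) := by
    rw [Submodule.disjoint_def]
    intro x hxk hxr
    obtain ⟨z, hzx⟩ := hxr
    have hx0 : (Cm + Atil) *ᵥ x = 0 := hxk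
    have hzx' : (Cm + Atil) *ᵥ z = x := hzx
    have h3 := hswapdot z x
    rw [hzx', hx0, dotProduct_zero] at h3
    exact dotProduct_self_eq_zero.mp h3
  have hdim : Module.finrank ℝ (LinearMap.ker f) + Module.finrank ℝ (LinearMap.range f)
      = Module.finrank ℝ ((Fin n ⊕ Fin n) → ℝ) := by
    rw [add_comm]
    exact LinearMap.finrank_range_add_finrank_ker f
  have htop : LinearMap.ker f ⊔ LinearMap.range f = ⊤ :=
    Submodule.eq_top_of_disjoint _ _ hdim.ge hdisj
  set b : (Fin n ⊕ Fin n) → ℝ := (Atil - 1) *ᵥ fun _ => (1 : ℝ) with hbdef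
  have hbmem : b ∈ LinearMap.ker f ⊔ LinearMap.range f := htop ▸ Submodule.mem_top
  obtain ⟨k, hkmem, r, hrmem, hkr⟩ := Submodule.mem_sup.mp hbmem
  obtain ⟨z, hz⟩ := hrmem
  have hk0 : (Cm + Atil) *ᵥ k = 0 := hkmem
  have hz' : (Cm + Atil) *ᵥ z = r := hz
  have hbk : b ⬝ᵥ k = 0 := by
    rw [hb]
    exact hkerprop k hk0
  have hrk : r ⬝ᵥ k = 0 := by
    rw [← hz', hswapdot z k, hk0, dotProduct_zero]
  have hkzero : k = 0 := by
    have : k ⬝ᵥ k = 0 := by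
      have := hbk
      rw [← hkr, add_dotProduct, hrk, add_zero] at this
      exact this
    exact dotProduct_self_eq_zero.mp this
  refine ⟨z, ?_⟩
  rw [hz', ← hkr, hkzero, zero_add]
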